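/- Let T' be a set packing of size m (i.e., |C_i ∩ T'| ≤ 1 for all i ∈ V), with m ≥ b₂ ≥ 1 and b₁ < m. Let σ² be the distribution that attacks each component of T' with marginal probability b₂/m (e.g., the uniform cyclic-window strategy). Then for every detector positioning S with |S| ≤ b₁, the expected number of undetected attacks satisfies E_{σ²}[|T| − F(S,T)] ≥ b₂(1 − b₁/m). -/

import Mathlib

/-- If the attacker targets each component of a set packing `T'` of size `m` with
marginal probability `b₂/m`, then against any positioning of at most `b₁ < m`
detectors the expected number of undetected attacks is at least `b₂(1 − b₁/m)`. -/
theorem packing_attack_guarantee {V E : Type*} [DecidableEq V] [DecidableEq E] [Fintype E]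
    (C : V → Finset E) (b₁ b₂ m : ℕ)
    (T' : Finset E) (hm : T'.card = m)
    (hpack : ∀ i : V, (C i ∩ T').card ≤ 1)
    (hb2 : 1 ≤ b₂) (hb2m : b₂ ≤ m) (hb1 : b₁ < m)
    (σ : Finset E → ℝ) (hσ0 : ∀ T, 0 ≤ σ T) (hσ1 : ∑ T : Finset E, σ T = 1)
    (hsupp : ∀ T : Finset E, σ T ≠ 0 → T ⊆ T')
    (hmarg : ∀ e ∈ T',
      ∑ T ∈ Finset.univ.filter (fun T : Finset E => e ∈ T), σ T = (b₂ : ℝ) / m) :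
    ∀ S : Finset V, S.card ≤ b₁ →
      (b₂ : ℝ) * (1 - (b₁ : ℝ) / m) ≤
        ∑ T : Finset E, σ T * ((T.card : ℝ) - ((S.biUnion C ∩ T).card : ℝ)) := by
  intro S hS
  have hm0 : 0 < m := lt_of_le_of_lt (Nat.zero_le _) hb1
  have hmR : (0:ℝ) < m := by exact_mod_cast hm0
  set A := S.biUnion C with hA
  -- rewrite each term as a sum over T'
  have key : ∀ T : Finset E,
      σ T * ((T.card : ℝ) - ((A ∩ T).card : ℝ)) =
      ∑ e ∈ T', (σ T * (if e ∈ T then (1:ℝ) else 0)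
        - σ T * (if e ∈ A then (if e ∈ T then (1:ℝ) else 0) else 0)) := by
    intro T
    by_cases h : σ T = 0
    · simp [h]
    · have hT : T ⊆ T' := hsupp T h
      have h1 : ∑ e ∈ T', (if e ∈ T then (1:ℝ) else 0) = (T.card : ℝ) := by
        rw [Finset.sum_ite_mem, Finset.inter_eq_right.mpr hT]
        simp
      have h2 : ∑ e ∈ T', (if e ∈ A then (if e ∈ T then (1:ℝ) else 0) else 0)
          = ((A ∩ T).card : ℝ) := by
        have : ∀ e ∈ T', (if e ∈ A then (if e ∈ T then (1:ℝ) else 0) else 0)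
            = (if e ∈ A ∩ T then (1:ℝ) else 0) := by
          intro e _
          by_cases hA' : e ∈ A <;> by_cases hT' : e ∈ T <;> simp [hA', hT']
        rw [Finset.sum_congr rfl this, Finset.sum_ite_mem,
          Finset.inter_eq_right.mpr (le_trans (Finset.inter_subset_right) hT)]
        simp
      rw [Finset.sum_sub_distrib, ← Finset.mul_sum, ← Finset.mul_sum, h1, h2, mul_sub]
  rw [Finset.sum_congr rfl (fun T _ => key T), Finset.sum_comm]
  -- compute the inner sums
  have inner : ∀ e ∈ T',
      ∑ T : Finset E, (σ T * (if e ∈ T then (1:ℝ) else 0)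
        - σ T * (if e ∈ A then (if e ∈ T then (1:ℝ) else 0) else 0))
      = (b₂ : ℝ)/m - (if e ∈ A then (b₂ : ℝ)/m else 0) := by
    intro e he
    have hmargsum : ∑ T : Finset E, σ T * (if e ∈ T then (1:ℝ) else 0) = (b₂ : ℝ)/m := by
      rw [← hmarg e he]
      rw [Finset.sum_filter]
      exact Finset.sum_congr rfl (fun T _ => by by_cases h : e ∈ T <;> simp [h])
    rw [Finset.sum_sub_distrib, hmargsum]
    congr 1
    by_cases hA' : e ∈ A
    · simp only [hA', if_true]; exact hmargsum
    · simp [hA']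
  rw [Finset.sum_congr rfl inner, Finset.sum_sub_distrib, Finset.sum_const, hm,
    Finset.sum_ite_mem, Finset.sum_const]
  have hcard : ((T' ∩ A).card : ℝ) ≤ (b₁ : ℝ) := by
    have h1 : T' ∩ A ⊆ S.biUnion (fun i => C i ∩ T') := by
      intro e he
      simp only [Finset.mem_inter, hA, Finset.mem_biUnion] at he ⊢
      obtain ⟨he', i, hi, hci⟩ := he
      exact ⟨i, hi, hci, he'⟩
    have h2 : (T' ∩ A).card ≤ b₁ := by
      calc (T' ∩ A).card ≤ (S.biUnion (fun i => C i ∩ T')).card := Finset.card_le_card h1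
        _ ≤ ∑ i ∈ S, (C i ∩ T').card := Finset.card_biUnion_le
        _ ≤ ∑ i ∈ S, 1 := Finset.sum_le_sum (fun i _ => hpack i)
        _ = S.card := by simp
        _ ≤ b₁ := hS
    exact_mod_cast h2
  have hb2R : (0:ℝ) ≤ b₂ := by positivity
  have : ((T' ∩ A).card : ℝ) * ((b₂:ℝ)/m) ≤ (b₁:ℝ) * ((b₂:ℝ)/m) := by
    apply mul_le_mul_of_nonneg_right hcard
    positivity
  simp only [nsmul_eq_mul]
  calc (b₂ : ℝ) * (1 - (b₁ : ℝ) / m)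
      = (m:ℝ) * ((b₂:ℝ)/m) - (b₁:ℝ) * ((b₂:ℝ)/m) := by field_simp
    _ ≤ (m:ℝ) * ((b₂:ℝ)/m) - ((T' ∩ A).card : ℝ) * ((b₂:ℝ)/m) := by linarith
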